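/- arXiv:1008.4713 — 3 statements merged into one kernel-verified Lean document; each statement's English description precedes it below -/
import Mathlib

section
/- For β ∈ (0,1), the function t ↦ sin(πβ) / (πβ(t² + 2t cos(πβ) + 1)) is a probability density on (0,∞). -/
open Real MeasureTheory Set

theorem stmt2 (β : ℝ) (hβ : β ∈ Ioo (0:ℝ) 1)
    (g : ℝ → ℝ)
    (hg : ∀ t : ℝ, g t =
      Real.sin (π * β) / (π * β * (t ^ 2 + 2 * t * Real.cos (π * β) + 1))) :
    (∀ t ∈ Ioi (0:ℝ), 0 ≤ g t) ∧ ∫ t in Ioi (0:ℝ), g t = 1 := by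
  obtain ⟨hβ0, hβ1⟩ := hβ
  have hπ : (0:ℝ) < π := Real.pi_pos
  have hπβ0 : 0 < π * β := by positivity
  have hπβπ : π * β < π := by nlinarith
  set c := Real.cos (π * β) with hc
  set s := Real.sin (π * β) with hs
  have hs0 : 0 < s := Real.sin_pos_of_pos_of_lt_pi hπβ0 hπβπ
  have hs2c2 : s ^ 2 + c ^ 2 = 1 := Real.sin_sq_add_cos_sq _
  have hD : ∀ t : ℝ, 0 < t ^ 2 + 2 * t * c + 1 := by
    intro t
    have : t ^ 2 + 2 * t * c + 1 = (t + c) ^ 2 + s ^ 2 := by ring_nf; nlinarith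
    rw [this]; positivity
  have hpos : ∀ t ∈ Ioi (0:ℝ), 0 ≤ g t := by
    intro t _
    rw [hg t]
    exact div_nonneg hs0.le (mul_pos hπβ0 (hD t)).le
  refine ⟨hpos, ?_⟩
  -- antiderivative
  set F : ℝ → ℝ := fun t => (1 / (π * β)) * Real.arctan ((t + c) / s) with hF
  have hderiv : ∀ t : ℝ, HasDerivAt F (g t) t := by
    intro t
    have h1 : HasDerivAt (fun t : ℝ => (t + c) / s) (1 / s) t := by
      simpa using ((hasDerivAt_id t).add_const c).div_const s
    have h2 : HasDerivAt (fun t : ℝ => Real.arctan ((t + c) / s))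
        ((1 / (1 + ((t + c) / s) ^ 2)) * (1 / s)) t :=
      (Real.hasDerivAt_arctan _).comp t h1
    have h3 := h2.const_mul (1 / (π * β))
    convert h3 using 1
    any_goals rfl
    rw [hg t]
    have hD' := hD t
    field_simp
    rw [div_eq_one_iff_eq (by nlinarith)]
    linear_combination hs2c2
  have hcont : ContinuousWithinAt F (Ici (0:ℝ)) 0 :=
    (hderiv 0).continuousAt.continuousWithinAt
  have htend : Filter.Tendsto F Filter.atTop (nhds ((1 / (π * β)) * (π / 2))) := by
    apply Filter.Tendsto.const_mul
    have h1 : Filter.Tendsto (fun t : ℝ => (t + c) / s) Filter.atTop Filter.atTop := by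
      apply Filter.Tendsto.atTop_div_const hs0
      exact Filter.tendsto_atTop_add_const_right _ c Filter.tendsto_id
    exact (Real.tendsto_arctan_atTop.mono_right nhdsWithin_le_nhds).comp h1
  have hint := integral_Ioi_of_hasDerivAt_of_nonneg hcont
      (fun x _ => hderiv x) hpos htend
  rw [hint]
  have harc : Real.arctan (c / s) = π / 2 - π * β := by
    have htan : Real.tan (π / 2 - π * β) = c / s := by
      rw [Real.tan_eq_sin_div_cos, Real.sin_pi_div_two_sub, Real.cos_pi_div_two_sub]
    rw [← htan, Real.arctan_tan] <;> linarith
  simp only [hF, zero_add, harc]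
  field_simp
  ring
end

section
/- The function x ↦ 1/E₂(x) on (0,∞), where E₂(x) = Σ_{n≥0} xⁿ/Γ(2n+1) = cosh(√x), is completely monotone: (-1)ⁿ (dⁿ/dxⁿ)(1/cosh(√x)) ≥ 0 for all n ≥ 0 and x > 0. -/
open Real Set Filter Topology

namespace CM7


/-- Iterated forward difference with step `h`. -/
def fd (h : ℝ) : ℕ → (ℝ → ℝ) → ℝ → ℝ
  | 0, f => f
  | n+1, f => fun x => fd h n f (x + h) - fd h n f x

lemma fd_zero (h : ℝ) (f : ℝ → ℝ) : fd h 0 f = f := rfl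

lemma fd_succ (h : ℝ) (n : ℕ) (f : ℝ → ℝ) (x : ℝ) :
    fd h (n+1) f x = fd h n f (x + h) - fd h n f x := rfl

/-- "smooth on `(0,∞)`" in the precise form we use. -/
def SM (f : ℝ → ℝ) : Prop :=
  ∀ (m : ℕ) (x : ℝ), 0 < x → HasDerivAt (iteratedDeriv m f) (iteratedDeriv (m+1) f x) x

lemma SM.deriv {f : ℝ → ℝ} (hf : SM f) : SM (_root_.deriv f) := by
  intro m x hx
  have := hf (m+1) x hx
  rwa [iteratedDeriv_succ' (n := m), iteratedDeriv_succ' (n := m+1)] at this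

lemma SM.hasDerivAt {f : ℝ → ℝ} (hf : SM f) {x : ℝ} (hx : 0 < x) :
    HasDerivAt f (_root_.deriv f x) x := by
  have := hf 0 x hx
  rwa [iteratedDeriv_zero, iteratedDeriv_one] at this

lemma fd_hasDerivAt {f : ℝ → ℝ} (hf : SM f) (h : ℝ) (hh : 0 < h) (n : ℕ) :
    ∀ x : ℝ, 0 < x → HasDerivAt (fd h n f) (fd h n (_root_.deriv f) x) x := by
  induction n with
  | zero => exact fun x hx => hf.hasDerivAt hx
  | succ n ih =>
      intro x hx
      have h1 : HasDerivAt (fun y => fd h n f (y + h)) (fd h n (_root_.deriv f) (x + h)) x := by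
        have := (ih (x + h) (by linarith)).comp x ((hasDerivAt_id x).add_const h)
        simpa [Function.comp_def] using this
      exact (h1.sub (ih x hx))



/-- MVT for iterated finite differences. -/
lemma fd_eq_iteratedDeriv (h : ℝ) (hh : 0 < h) :
    ∀ (n : ℕ) (f : ℝ → ℝ), SM f → ∀ x : ℝ, 0 < x →
      ∃ ξ ∈ Icc x (x + n * h), fd h n f x = h ^ n * iteratedDeriv n f ξ := by
  intro n
  induction n with
  | zero =>
      intro f hf x hx
      refine ⟨x, ?_, ?_⟩
      · constructor <;> simp
      · simp [fd, iteratedDeriv_zero]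
  | succ n ih =>
      intro f hf x hx
      -- MVT on fd h n f over [x, x+h]
      have hxh : x < x + h := by linarith
      have hcont : ContinuousOn (fd h n f) (Icc x (x + h)) := by
        intro y hy
        exact ((fd_hasDerivAt hf h hh n y (lt_of_lt_of_le hx hy.1)).continuousAt).continuousWithinAt
      have hder : ∀ y ∈ Ioo x (x + h), HasDerivAt (fd h n f) (fd h n (_root_.deriv f) y) y :=
        fun y hy => fd_hasDerivAt hf h hh n y (lt_trans hx hy.1)
      obtain ⟨c, hc, hceq⟩ := exists_hasDerivAt_eq_slope (fd h n f) (fd h n (_root_.deriv f))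
        hxh hcont hder
      obtain ⟨ξ, hξ, hval⟩ := ih (_root_.deriv f) hf.deriv c (lt_trans hx hc.1)
      refine ⟨ξ, ⟨le_trans hc.1.le hξ.1, ?_⟩, ?_⟩
      · have : c + n * h ≤ x + h + n * h := by nlinarith [hc.2]
        have h2 : x + h + n * h = x + (n + 1 : ℕ) * h := by push_cast; ring
        exact hξ.2.trans (h2 ▸ this)
      · have hne : x + h - x = h := by ring
        rw [hne] at hceq
        have : fd h (n+1) f x = h * fd h n (_root_.deriv f) c := by
          rw [hceq]; field_simp [fd]; rfl
        rw [this, hval, iteratedDeriv_succ' (n := n)]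
        ring


lemma sm_of_contDiffOn {f : ℝ → ℝ} (hf : ∀ k : ℕ, ContDiffOn ℝ k f (Ioi 0)) : SM f := by
  have hs : IsOpen (Ioi (0:ℝ)) := isOpen_Ioi
  have hu : UniqueDiffOn ℝ (Ioi (0:ℝ)) := hs.uniqueDiffOn
  intro m x hx
  have heq : ∀ y ∈ Ioi (0:ℝ), iteratedDerivWithin m f (Ioi 0) y = iteratedDeriv m f y := by
    intro y hy
    rw [iteratedDerivWithin_eq_iteratedFDerivWithin, iteratedDeriv_eq_iteratedFDeriv,
      iteratedFDerivWithin_of_isOpen m hs hy]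
  have hdiff : DifferentiableOn ℝ (iteratedDerivWithin m f (Ioi 0)) (Ioi 0) := by
    refine (hf (m+1)).differentiableOn_iteratedDerivWithin ?_ hu
    exact_mod_cast Nat.lt_succ_self m
  have hDA : DifferentiableAt ℝ (iteratedDeriv m f) x := by
    have h1 : DifferentiableAt ℝ (iteratedDerivWithin m f (Ioi 0)) x :=
      (hdiff x hx).differentiableAt (hs.mem_nhds hx)
    refine h1.congr_of_eventuallyEq ?_
    filter_upwards [hs.mem_nhds hx] with y hy using (heq y hy).symm
  have := hDA.hasDerivAt
  rwa [← iteratedDeriv_succ] at this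


/-- alternating finite differences are nonnegative -/
def DCM (f : ℝ → ℝ) : Prop :=
  ∀ (n : ℕ) (h x : ℝ), 0 < h → 0 < x → 0 ≤ (-1) ^ n * fd h n f x

lemma contDiffOn_q {a : ℝ} (ha : 0 < a) (k : ℕ) :
    ContDiffOn ℝ k (fun y : ℝ => (a + y)⁻¹) (Ioi 0) := by
  refine ContDiffOn.inv ?_ ?_
  · exact (contDiffOn_const.add contDiffOn_id)
  · intro y hy; have : (0:ℝ) < y := hy; positivity

lemma sm_q {a : ℝ} (ha : 0 < a) : SM (fun y : ℝ => (a + y)⁻¹) :=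
  sm_of_contDiffOn (fun k => contDiffOn_q ha k)

lemma iteratedDeriv_q {a : ℝ} (ha : 0 < a) (n : ℕ) :
    ∀ x : ℝ, 0 < x →
      iteratedDeriv n (fun y : ℝ => (a + y)⁻¹) x
        = (-1) ^ n * (Nat.factorial n : ℝ) * ((a + x) ^ (n+1))⁻¹ := by
  induction n with
  | zero => intro x hx; simp
  | succ n ih =>
      intro x hx
      have hax : (0:ℝ) < a + x := by linarith
      rw [iteratedDeriv_succ]
      have hev : iteratedDeriv n (fun y : ℝ => (a + y)⁻¹)
          =ᶠ[nhds x] fun y => (-1) ^ n * (Nat.factorial n : ℝ) * ((a + y) ^ (n+1))⁻¹ := by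
        filter_upwards [isOpen_Ioi.mem_nhds (show x ∈ Ioi (0:ℝ) from hx)] with y hy
        exact ih y hy
      rw [hev.deriv_eq]
      have hD : HasDerivAt (fun y : ℝ => (-1) ^ n * (Nat.factorial n : ℝ) * ((a + y) ^ (n+1))⁻¹)
          ((-1) ^ n * (Nat.factorial n : ℝ) * (-(((n:ℝ)+1) * (a + x) ^ n) / ((a + x) ^ (n+1)) ^ 2)) x := by
        have h1 : HasDerivAt (fun y : ℝ => (a + y) ^ (n+1)) (((n:ℝ)+1) * (a + x) ^ n) x := by
          have h0 : HasDerivAt (fun y : ℝ => a + y) 1 x := by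
            simpa using (hasDerivAt_id x).const_add a
          have := h0.pow (n+1)
          simpa [Pi.pow_def] using this
        have h2 := h1.inv (by positivity)
        have := h2.const_mul ((-1:ℝ) ^ n * (Nat.factorial n : ℝ))
        exact this
      rw [hD.deriv]
      have hax' : (a + x) ≠ 0 := ne_of_gt hax
      rw [Nat.factorial_succ]
      push_cast
      field_simp
      ring


lemma fd_rec (h : ℝ) (n : ℕ) (f : ℝ → ℝ) (x : ℝ) :
    fd h n f (x + h) = fd h n f x + fd h (n+1) f x := by
  rw [show fd h (n+1) f x = fd h n f (x + h) - fd h n f x from rfl]; ring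

/-- Discrete Leibniz rule. -/
lemma fd_mul (h : ℝ) (f g : ℝ → ℝ) (n : ℕ) :
    ∀ x, fd h n (fun y => f y * g y) x
      = ∑ k ∈ Finset.range (n+1),
          (n.choose k : ℝ) * fd h k f x * fd h (n-k) g (x + k * h) := by
  induction n with
  | zero => intro x; simp [fd]
  | succ n ih =>
      intro x
      have key : fd h (n+1) (fun y => f y * g y) x
          = ∑ k ∈ Finset.range (n+1),
              ((n.choose k : ℝ) * fd h k f x * fd h ((n-k)+1) g (x + k * h)
               + (n.choose k : ℝ) * fd h (k+1) f x * fd h (n-k) g (x + (k+1) * h)) := by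
        have h0 : fd h (n+1) (fun y => f y * g y) x
            = (∑ k ∈ Finset.range (n+1),
                (n.choose k : ℝ) * fd h k f (x+h) * fd h (n-k) g ((x+h) + k * h))
              - ∑ k ∈ Finset.range (n+1),
                (n.choose k : ℝ) * fd h k f x * fd h (n-k) g (x + k * h) := by
          rw [show fd h (n+1) (fun y => f y * g y) x
              = fd h n (fun y => f y * g y) (x+h) - fd h n (fun y => f y * g y) x from rfl,
            ih, ih]
        rw [h0, ← Finset.sum_sub_distrib]
        refine Finset.sum_congr rfl (fun k _ => ?_)
        have hF : fd h k f (x+h) = fd h k f x + fd h (k+1) f x := fd_rec h k f x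
        have harg1 : (x+h) + k*h = (x + k*h) + h := by ring
        have harg2 : x + (k+1)*h = (x + k*h) + h := by ring
        have hG : fd h (n-k) g ((x+h) + k*h)
            = fd h (n-k) g (x + k*h) + fd h ((n-k)+1) g (x + k*h) := by
          rw [harg1, fd_rec]
        have hG2 : fd h (n-k) g (x + (k+1)*h)
            = fd h (n-k) g (x + k*h) + fd h ((n-k)+1) g (x + k*h) := by
          rw [harg2, fd_rec]
        rw [hF, hG, hG2]; ring
      rw [key, Finset.sum_add_distrib]
      -- now massage the RHS (the goal's RHS) into the two sums
      have hB : ∑ k ∈ Finset.range (n+1+1),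
            ((n+1).choose k : ℝ) * fd h k f x * fd h ((n+1)-k) g (x + k * h)
          = (∑ k ∈ Finset.range (n+1),
              ((n.choose k : ℝ) * fd h (k+1) f x * fd h (n-k) g (x + (k+1) * h)
               + (n.choose (k+1) : ℝ) * fd h (k+1) f x * fd h (n-k) g (x + (k+1) * h)))
            + (1 : ℝ) * fd h 0 f x * fd h (n+1) g (x + 0 * h) := by
        rw [Finset.sum_range_succ']
        congr 1
        · refine Finset.sum_congr rfl (fun k _ => ?_)
          have hsub : (n+1) - (k+1) = n - k := by omega
          rw [hsub, Nat.choose_succ_succ]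
          push_cast
          ring
        · norm_num
      rw [hB]
      have hsplit : ∑ k ∈ Finset.range (n+1),
            ((n.choose k : ℝ) * fd h (k+1) f x * fd h (n-k) g (x + (k+1) * h)
             + (n.choose (k+1) : ℝ) * fd h (k+1) f x * fd h (n-k) g (x + (k+1) * h))
          = (∑ k ∈ Finset.range (n+1),
              (n.choose k : ℝ) * fd h (k+1) f x * fd h (n-k) g (x + (k+1) * h))
            + ∑ k ∈ Finset.range (n+1),
              (n.choose (k+1) : ℝ) * fd h (k+1) f x * fd h (n-k) g (x + (k+1) * h) :=
        Finset.sum_add_distrib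
      rw [hsplit]
      have hA : (∑ k ∈ Finset.range (n+1),
            (n.choose (k+1) : ℝ) * fd h (k+1) f x * fd h (n-k) g (x + (k+1) * h))
            + (1 : ℝ) * fd h 0 f x * fd h (n+1) g (x + 0 * h)
          = ∑ k ∈ Finset.range (n+1),
              (n.choose k : ℝ) * fd h k f x * fd h ((n-k)+1) g (x + k * h) := by
        have e1 : (∑ k ∈ Finset.range (n+1),
              (n.choose (k+1) : ℝ) * fd h (k+1) f x * fd h (n-k) g (x + (k+1) * h))
              + (1 : ℝ) * fd h 0 f x * fd h (n+1) g (x + 0 * h)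
            = ∑ k ∈ Finset.range (n+2),
              (n.choose k : ℝ) * fd h k f x * fd h ((n+1)-k) g (x + k * h) := by
          conv_rhs => rw [Finset.sum_range_succ']
          congr 1
          · refine Finset.sum_congr rfl (fun k _ => ?_)
            have hsub : (n+1) - (k+1) = n - k := by omega
            rw [hsub]
            push_cast
            ring
          · norm_num
        rw [e1, Finset.sum_range_succ]
        have : (n.choose (n+1) : ℝ) = 0 := by
          rw [Nat.choose_eq_zero_of_lt (by omega)]; norm_num
        rw [this]
        simp only [zero_mul, mul_zero, add_zero]
        refine Finset.sum_congr rfl (fun k hk => ?_)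
        have hk' : k ≤ n := Nat.lt_succ_iff.mp (Finset.mem_range.mp hk)
        have hsub : (n+1) - k = (n-k) + 1 := by omega
        rw [hsub]
      rw [← hA]
      ring


lemma DCM.mul {f g : ℝ → ℝ} (hf : DCM f) (hg : DCM g) : DCM (fun y => f y * g y) := by
  intro n h x hh hx
  rw [fd_mul]
  rw [Finset.mul_sum]
  refine Finset.sum_nonneg (fun k hk => ?_)
  have hk' : k ≤ n := Nat.lt_succ_iff.mp (Finset.mem_range.mp hk)
  have hsgn : (-1:ℝ) ^ n = (-1) ^ k * (-1) ^ (n - k) := by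
    rw [← pow_add]
    congr 1
    omega
  have hxk : 0 < x + k * h := by
    have : (0:ℝ) ≤ (k:ℝ) * h := by positivity
    linarith
  have h1 := hf k h x hh hx
  have h2 := hg (n-k) h (x + k*h) hh hxk
  have : (-1:ℝ) ^ n * ((n.choose k : ℝ) * fd h k f x * fd h (n-k) g (x + k * h))
      = (n.choose k : ℝ) * (((-1:ℝ)^k * fd h k f x) * ((-1:ℝ)^(n-k) * fd h (n-k) g (x + k*h))) := by
    rw [hsgn]; ring
  rw [this]
  positivity
  
lemma fd_const (h c : ℝ) (n : ℕ) : ∀ x, fd h (n+1) (fun _ => c) x = 0 := by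
  induction n with
  | zero => intro x; simp [fd]
  | succ n ih => intro x; simp only [fd] at ih ⊢; rw [ih, ih]; ring

lemma DCM.const (c : ℝ) (hc : 0 ≤ c) : DCM (fun _ => c) := by
  intro n h x hh hx
  cases n with
  | zero => simpa [fd] using hc
  | succ n => rw [fd_const]; simp

lemma DCM.prod {F : ℕ → ℝ → ℝ} (hF : ∀ k, DCM (F k)) (N : ℕ) :
    DCM (fun x => ∏ k ∈ Finset.range N, F k x) := by
  induction N with
  | zero => simpa using DCM.const 1 zero_le_one
  | succ N ih =>
      have : (fun x => ∏ k ∈ Finset.range (N+1), F k x)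
          = fun x => (∏ k ∈ Finset.range N, F k x) * F N x := by
        funext x; rw [Finset.prod_range_succ]
      rw [this]
      exact ih.mul (hF N)

lemma fd_tendsto {F : ℕ → ℝ → ℝ} {f : ℝ → ℝ} (h : ℝ) (hh : 0 < h)
    (hconv : ∀ y : ℝ, 0 < y → Tendsto (fun N => F N y) atTop (𝓝 (f y))) (n : ℕ) :
    ∀ x : ℝ, 0 < x → Tendsto (fun N => fd h n (F N) x) atTop (𝓝 (fd h n f x)) := by
  induction n with
  | zero => exact hconv
  | succ n ih =>
      intro x hx
      exact (ih (x+h) (by linarith)).sub (ih x hx)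

lemma dcm_of_tendsto {F : ℕ → ℝ → ℝ} {f : ℝ → ℝ}
    (hF : ∀ N, DCM (F N))
    (hconv : ∀ y : ℝ, 0 < y → Tendsto (fun N => F N y) atTop (𝓝 (f y))) : DCM f := by
  intro n h x hh hx
  have h1 : Tendsto (fun N => (-1:ℝ)^n * fd h n (F N) x) atTop (𝓝 ((-1)^n * fd h n f x)) :=
    (fd_tendsto h hh hconv n x hx).const_mul _
  exact ge_of_tendsto' h1 (fun N => hF N n h x hh hx)

/-- From discrete complete monotonicity and smoothness to derivative signs. -/
lemma cm_of_dcm {f : ℝ → ℝ} (hsm : SM f) (hdcm : DCM f) (n : ℕ) (x : ℝ) (hx : 0 < x) :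
    0 ≤ (-1) ^ n * iteratedDeriv n f x := by
  -- step sizes h_j = x / (j+1)
  set s : ℕ → ℝ := fun j => x / ((j:ℝ) + 1) with hs
  have hspos : ∀ j, 0 < s j := fun j => by positivity
  have hpick : ∀ j : ℕ, ∃ ξ ∈ Icc x (x + n * s j),
      fd (s j) n f x = (s j) ^ n * iteratedDeriv n f ξ :=
    fun j => fd_eq_iteratedDeriv (s j) (hspos j) n f hsm x hx
  choose ξ hξ hval using hpick
  have hsign : ∀ j, 0 ≤ (-1)^n * iteratedDeriv n f (ξ j) := by
    intro j
    have h0 := hdcm n (s j) x (hspos j) hx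
    rw [hval j] at h0
    have h1 : (0:ℝ) < (s j)^n := pow_pos (hspos j) n
    nlinarith [h0, h1, sq_nonneg ((-1:ℝ)^n * iteratedDeriv n f (ξ j))]
  -- ξ j → x
  have hto : Tendsto ξ atTop (𝓝 x) := by
    have hub : Tendsto (fun j => x + n * s j) atTop (𝓝 x) := by
      have : Tendsto s atTop (𝓝 0) := by
        rw [hs]
        exact tendsto_const_nhds.div_atTop (tendsto_atTop_add_const_right _ _ tendsto_natCast_atTop_atTop)
      have h2 := (this.const_mul (n:ℝ)).const_add x
      simpa using h2
    exact tendsto_of_tendsto_of_tendsto_of_le_of_le tendsto_const_nhds hub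
      (fun j => (hξ j).1) (fun j => (hξ j).2)
  have hcont : ContinuousAt (iteratedDeriv n f) x := (hsm n x hx).continuousAt
  have hlim : Tendsto (fun j => (-1:ℝ)^n * iteratedDeriv n f (ξ j)) atTop
      (𝓝 ((-1)^n * iteratedDeriv n f x)) := ((hcont.tendsto).comp hto).const_mul _
  exact ge_of_tendsto' hlim hsign



noncomputable def Aseq (t : ℝ) (n : ℕ) : ℝ :=
  ∏ j ∈ Finset.range n, (1 + t^2 / (π^2 * ((j:ℝ)+1)^2))

noncomputable def Cseq (t : ℝ) (N : ℕ) : ℝ :=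
  ∏ k ∈ Finset.range N, (1 + 4*t^2 / (π^2 * (2*(k:ℝ)+1)^2))

lemma Aseq_pos (t : ℝ) (n : ℕ) : 0 < Aseq t n := by
  refine Finset.prod_pos (fun j _ => ?_)
  have : 0 < π^2 * ((j:ℝ)+1)^2 := by positivity
  positivity

lemma Cseq_pos (t : ℝ) (n : ℕ) : 0 < Cseq t n := by
  refine Finset.prod_pos (fun j _ => ?_)
  have : 0 < π^2 * (2*(j:ℝ)+1)^2 := by positivity
  positivity

/-- convergence of the sine-type product to sinh t / t -/
lemma tendsto_Aseq (t : ℝ) (ht : t ≠ 0) :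
    Tendsto (fun n => Aseq t n) atTop (𝓝 (Real.sinh t / t)) := by
  have hπ : (π:ℂ) ≠ 0 := Complex.ofReal_ne_zero.mpr Real.pi_ne_zero
  set z : ℂ := (t : ℂ) * Complex.I / π with hz
  have hπz : (π:ℂ) * z = (t:ℂ) * Complex.I := by
    rw [hz]; field_simp
  have hsin : Complex.sin ((π:ℂ) * z) = (Real.sinh t : ℂ) * Complex.I := by
    rw [hπz, Complex.sin_mul_I, Complex.ofReal_sinh]
  have hC := Complex.tendsto_euler_sin_prod z
  rw [hsin] at hC
  have hterm : ∀ n : ℕ, (π:ℂ) * z * ∏ j ∈ Finset.range n, (1 - z^2/((j:ℂ)+1)^2)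
      = (t:ℂ) * Complex.I * ((Aseq t n : ℝ) : ℂ) := by
    intro n
    rw [hπz]
    congr 1
    rw [Aseq, Complex.ofReal_prod]
    refine Finset.prod_congr rfl (fun j _ => ?_)
    have hz2 : z^2 = -(t:ℂ)^2 / (π:ℂ)^2 := by
      rw [hz]; rw [div_pow, mul_pow, Complex.I_sq]; ring
    rw [hz2]
    push_cast
    have hπj : ((π:ℂ)^2 * ((j:ℂ)+1)^2) ≠ 0 := by
      apply mul_ne_zero
      · exact pow_ne_zero _ hπ
      · exact pow_ne_zero _ (Nat.cast_add_one_ne_zero j)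
    field_simp
    ring
  rw [show (fun n => (π:ℂ) * z * ∏ j ∈ Finset.range n, (1 - z^2/((j:ℂ)+1)^2))
      = (fun n => (t:ℂ) * Complex.I * ((Aseq t n : ℝ) : ℂ)) from funext hterm] at hC
  -- divide by t * I
  have htI : (t:ℂ) * Complex.I ≠ 0 := by
    apply mul_ne_zero (Complex.ofReal_ne_zero.mpr ht) Complex.I_ne_zero
  have hC2 : Tendsto (fun n => ((Aseq t n : ℝ) : ℂ)) atTop
      (𝓝 (((t:ℂ) * Complex.I)⁻¹ * ((Real.sinh t : ℂ) * Complex.I))) := by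
    have h3 := hC.const_mul (((t:ℂ) * Complex.I)⁻¹)
    have h4 : (fun n => ((t:ℂ) * Complex.I)⁻¹ * ((t:ℂ) * Complex.I * ((Aseq t n : ℝ) : ℂ)))
        = fun n => ((Aseq t n : ℝ) : ℂ) := by
      funext n
      rw [← mul_assoc, inv_mul_cancel₀ htI, one_mul]
    rwa [h4] at h3
  have hval : ((t:ℂ) * Complex.I)⁻¹ * ((Real.sinh t : ℂ) * Complex.I)
      = ((Real.sinh t / t : ℝ) : ℂ) := by
    have htc : (t:ℂ) ≠ 0 := Complex.ofReal_ne_zero.mpr ht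
    push_cast
    rw [mul_inv]
    have hre : ((t:ℂ))⁻¹ * Complex.I⁻¹ * (Complex.sinh (t:ℂ) * Complex.I)
        = Complex.sinh (t:ℂ) * (Complex.I * Complex.I⁻¹) * ((t:ℂ))⁻¹ := by ring
    rw [hre, mul_inv_cancel₀ Complex.I_ne_zero, mul_one, div_eq_mul_inv]
  rw [hval] at hC2
  have := (Complex.continuous_re.tendsto _).comp hC2
  simpa [Function.comp_def, Complex.sinh_ofReal_re] using this

lemma Aseq_double (t : ℝ) (N : ℕ) : Aseq (2*t) (2*N) = Aseq t N * Cseq t N := by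
  induction N with
  | zero => simp [Aseq, Cseq]
  | succ N ih =>
      have key : Aseq (2*t) (2*(N+1)) = Aseq (2*t) (2*N)
          * (1 + (2*t)^2/(π^2*(2*(N:ℝ)+1)^2)) * (1 + (2*t)^2/(π^2*(2*(N:ℝ)+2)^2)) := by
        rw [show 2*(N+1) = (2*N+1)+1 from by ring, Aseq, Finset.prod_range_succ,
          Finset.prod_range_succ, ← Aseq]
        push_cast
        ring
      have kA : Aseq t (N+1) = Aseq t N * (1 + t^2/(π^2*((N:ℝ)+1)^2)) := by
        rw [Aseq, Finset.prod_range_succ, ← Aseq]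
      have kC : Cseq t (N+1) = Cseq t N * (1 + 4*t^2/(π^2*(2*(N:ℝ)+1)^2)) := by
        rw [Cseq, Finset.prod_range_succ, ← Cseq]
      rw [key, ih, kA, kC]
      have e1 : (1 + (2*t)^2/(π^2*(2*(N:ℝ)+1)^2)) = (1 + 4*t^2/(π^2*(2*(N:ℝ)+1)^2)) := by
        ring_nf
      have e2 : (1 + (2*t)^2/(π^2*(2*(N:ℝ)+2)^2)) = (1 + t^2/(π^2*((N:ℝ)+1)^2)) := by
        have hd : (π^2 * (2*(N:ℝ)+2)^2) = 4 * (π^2 * ((N:ℝ)+1)^2) := by ring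
        rw [hd]
        have hne : (π^2 * ((N:ℝ)+1)^2) ≠ 0 := by positivity
        field_simp
        ring
      rw [e1, e2]
      ring

lemma tendsto_Cseq (t : ℝ) (ht : 0 < t) :
    Tendsto (fun N => Cseq t N) atTop (𝓝 (Real.cosh t)) := by
  have hsinh : Real.sinh t ≠ 0 := ne_of_gt (Real.sinh_pos_iff.mpr ht)
  have ht' : t ≠ 0 := ne_of_gt ht
  have hA := tendsto_Aseq t ht'
  have h2N : Tendsto (fun N : ℕ => 2*N) atTop atTop :=
    Filter.tendsto_atTop_atTop.mpr (fun b => ⟨b, fun a ha => by omega⟩)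
  have hA2 : Tendsto (fun N => Aseq (2*t) (2*N)) atTop (𝓝 (Real.sinh (2*t) / (2*t))) :=
    (tendsto_Aseq (2*t) (by positivity)).comp h2N
  have hAC : Tendsto (fun N => Aseq t N * Cseq t N) atTop (𝓝 (Real.sinh (2*t) / (2*t))) := by
    rw [show (fun N => Aseq t N * Cseq t N) = fun N => Aseq (2*t) (2*N) from
      funext (fun N => (Aseq_double t N).symm)]
    exact hA2
  have hlim : Real.sinh t / t ≠ 0 := by
    simp [hsinh, ht']
  have hC : Tendsto (fun N => (Aseq t N)⁻¹ * (Aseq t N * Cseq t N)) atTop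
      (𝓝 ((Real.sinh t / t)⁻¹ * (Real.sinh (2*t) / (2*t)))) :=
    (hA.inv₀ hlim).mul hAC
  have heq : (fun N => (Aseq t N)⁻¹ * (Aseq t N * Cseq t N)) = fun N => Cseq t N := by
    funext N
    rw [← mul_assoc, inv_mul_cancel₀ (ne_of_gt (Aseq_pos t N)), one_mul]
  rw [heq] at hC
  have hval : (Real.sinh t / t)⁻¹ * (Real.sinh (2*t) / (2*t)) = Real.cosh t := by
    rw [Real.sinh_two_mul]
    field_simp
  rwa [hval] at hC




lemma fd_const_mul (h : ℝ) (c : ℝ) (f : ℝ → ℝ) (n : ℕ) :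
    ∀ x, fd h n (fun y => c * f y) x = c * fd h n f x := by
  induction n with
  | zero => intro x; rfl
  | succ n ih => intro x; simp only [fd, ih]; ring

lemma dcm_q {a : ℝ} (ha : 0 < a) : DCM (fun y : ℝ => (a + y)⁻¹) := by
  intro n h x hh hx
  obtain ⟨ξ, hξ, hval⟩ := fd_eq_iteratedDeriv h hh n _ (sm_q ha) x hx
  have hξ0 : 0 < ξ := lt_of_lt_of_le hx hξ.1
  rw [hval, iteratedDeriv_q ha n ξ hξ0]
  have h1 : (-1:ℝ) ^ n * (h ^ n * ((-1) ^ n * (Nat.factorial n : ℝ) * ((a + ξ) ^ (n+1))⁻¹))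
      = h ^ n * (Nat.factorial n : ℝ) * ((a + ξ) ^ (n+1))⁻¹ := by
    rw [show ((-1:ℝ)^n * (h ^ n * ((-1) ^ n * (Nat.factorial n : ℝ) * ((a + ξ) ^ (n+1))⁻¹)))
      = ((-1:ℝ)^n)^2 * (h ^ n * (Nat.factorial n : ℝ) * ((a + ξ) ^ (n+1))⁻¹) by ring]
    rw [← pow_mul, pow_mul']
    simp
  rw [h1]
  have : (0:ℝ) < a + ξ := by linarith
  positivity

lemma DCM.const_mul {f : ℝ → ℝ} (hf : DCM f) {c : ℝ} (hc : 0 ≤ c) :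
    DCM (fun y => c * f y) := by
  intro n h x hh hx
  rw [fd_const_mul]
  have := hf n h x hh hx
  calc (0:ℝ) ≤ c * ((-1)^n * fd h n f x) := mul_nonneg hc this
    _ = (-1)^n * (c * fd h n f x) := by ring

noncomputable def bb (k : ℕ) : ℝ := π^2 * (2*(k:ℝ)+1)^2 / 4

lemma bb_pos (k : ℕ) : 0 < bb k := by
  have := Real.pi_pos
  rw [bb]; positivity

noncomputable def PP (N : ℕ) : ℝ → ℝ := fun x => ∏ k ∈ Finset.range N, (bb k * (bb k + x)⁻¹)

lemma dcm_PP (N : ℕ) : DCM (PP N) :=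
  DCM.prod (fun k => (dcm_q (bb_pos k)).const_mul (bb_pos k).le) N

lemma tendsto_PP (x : ℝ) (hx : 0 < x) :
    Tendsto (fun N => PP N x) atTop (𝓝 (1 / Real.cosh (Real.sqrt x))) := by
  set t := Real.sqrt x with htdef
  have ht : 0 < t := Real.sqrt_pos.mpr hx
  have ht2 : t^2 = x := Real.sq_sqrt hx.le
  have hPC : ∀ N, PP N x = (∏ k ∈ Finset.range N, (1 + 4*t^2 / (π^2 * (2*(k:ℝ)+1)^2)))⁻¹ := by
    intro N
    rw [PP, ← Finset.prod_inv_distrib]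
    refine Finset.prod_congr rfl (fun k _ => ?_)
    have hbk := bb_pos k
    have hbx : bb k + x ≠ 0 := by positivity
    have hπ : π ≠ 0 := Real.pi_ne_zero
    have hfr : (1 + 4*x/(π^2*(2*(k:ℝ)+1)^2)) = (bb k + x) / bb k := by
      rw [bb]
      field_simp
    rw [ht2, hfr, inv_div, div_eq_mul_inv]
  have hcosh : Real.cosh t ≠ 0 := (Real.cosh_pos _).ne'
  have hC := tendsto_Cseq t ht
  unfold Cseq at hC
  have := hC.inv₀ hcosh
  rw [show (fun N => PP N x)
      = fun N => (∏ k ∈ Finset.range N, (1 + 4*t^2 / (π^2 * (2*(k:ℝ)+1)^2)))⁻¹ from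
    funext hPC]
  simpa [one_div] using this

lemma sm_f : SM (fun y : ℝ => 1 / Real.cosh (Real.sqrt y)) := by
  refine sm_of_contDiffOn (fun k => ?_)
  have hsq : ContDiffOn ℝ k Real.sqrt (Ioi 0) :=
    fun y hy => (Real.contDiffAt_sqrt (ne_of_gt (show (0:ℝ) < y from hy))).contDiffWithinAt
  have hcomp : ContDiffOn ℝ k (fun y => Real.cosh (Real.sqrt y)) (Ioi 0) :=
    Real.contDiff_cosh.comp_contDiffOn hsq
  exact ContDiffOn.div contDiffOn_const hcomp (fun y _ => (Real.cosh_pos _).ne')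

end CM7

/-- `x ↦ 1/E₂(x) = 1/cosh(√x)` is completely monotone on `(0,∞)`. -/
theorem stmt7 :
    ∀ (n : ℕ) (x : ℝ), 0 < x →
      0 ≤ (-1 : ℝ) ^ n *
        iteratedDeriv n (fun y : ℝ => 1 / Real.cosh (Real.sqrt y)) x := by
  intro n x hx
  have hdcm : CM7.DCM (fun y : ℝ => 1 / Real.cosh (Real.sqrt y)) :=
    CM7.dcm_of_tendsto (fun N => CM7.dcm_PP N) (fun y hy => CM7.tendsto_PP y hy)
  exact CM7.cm_of_dcm CM7.sm_f hdcm n x hx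
end

section
/- For α ∈ (1,2), the improper integral ∫₀¹ (y^{α-2} - 1)/(1-y)^α dy converges and equals 1/(α-1). -/
open Real MeasureTheory Set Filter Topology

theorem stmt9 (α : ℝ) (hα : α ∈ Ioo (1:ℝ) 2) :
    IntegrableOn (fun y : ℝ => (y ^ (α - 2) - 1) / (1 - y) ^ α) (Ioo 0 1) ∧
    ∫ y in Ioo (0:ℝ) 1, (y ^ (α - 2) - 1) / (1 - y) ^ α = 1 / (α - 1) := by
  obtain ⟨ha1, ha2⟩ := hα
  have hc : 0 < α - 1 := by linarith
  have hc' : α - 1 ≠ 0 := ne_of_gt hc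
  set f : ℝ → ℝ := fun y => (y ^ (α - 2) - 1) / (1 - y) ^ α with hfdef
  set F : ℝ → ℝ := fun y => (y ^ (α - 1) - 1) / ((α - 1) * (1 - y) ^ (α - 1)) with hFdef
  set g : ℝ → ℝ := fun y => if y < 1 then F y else 0 with hgdef
  -- derivative of F on (0,1)
  have hderiv : ∀ y ∈ Ioo (0:ℝ) 1, HasDerivAt g (f y) y := by
    intro y hy
    obtain ⟨hy0, hy1⟩ := hy
    have h1y : 0 < 1 - y := by linarith
    have hFd : HasDerivAt F (f y) y := by
      have hnum : HasDerivAt (fun y : ℝ => y ^ (α - 1) - 1) ((α - 1) * y ^ (α - 2)) y := by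
        have := (Real.hasDerivAt_rpow_const (x := y) (p := α - 1) (Or.inl hy0.ne')).sub_const 1
        refine this.congr_deriv ?_
        ring_nf
      have hden : HasDerivAt (fun y : ℝ => (α - 1) * (1 - y) ^ (α - 1))
          ((α - 1) * (-((α - 1) * (1 - y) ^ (α - 2)))) y := by
        have hbase : HasDerivAt (fun y : ℝ => 1 - y) (-1) y := by
          simpa using (hasDerivAt_id y).const_sub 1
        have h2 := (Real.hasDerivAt_rpow_const (x := 1 - y) (p := α - 1)
          (Or.inl h1y.ne')).comp y hbase
        have h3 := h2.const_mul (α - 1)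
        refine h3.congr_deriv ?_
        rw [show α - 1 - 1 = α - 2 by ring]
        ring
      have hden0 : (α - 1) * (1 - y) ^ (α - 1) ≠ 0 :=
        mul_ne_zero hc' (ne_of_gt (Real.rpow_pos_of_pos h1y _))
      have hd := hnum.div hden hden0
      refine hd.congr_deriv ?_
      have e1 : (1 - y) ^ (α - 1) = (1 - y) ^ (α - 2) * (1 - y) := by
        rw [show α - 1 = (α - 2) + 1 by ring, Real.rpow_add_one h1y.ne']
      have e2 : (1 - y) ^ α = (1 - y) ^ (α - 2) * (1 - y) * (1 - y) := by
        rw [← Real.rpow_add_one h1y.ne', ← Real.rpow_add_one h1y.ne']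
        congr 1
        ring
      have e3 : y ^ (α - 1) = y ^ (α - 2) * y := by
        rw [show α - 1 = (α - 2) + 1 by ring, Real.rpow_add_one hy0.ne']
      have hB : (1 - y) ^ (α - 2) ≠ 0 := ne_of_gt (Real.rpow_pos_of_pos h1y _)
      rw [hfdef]
      simp only
      rw [e1, e2, e3]
      field_simp
      ring
    have hev : g =ᶠ[𝓝 y] F := by
      filter_upwards [eventually_lt_nhds hy1] with x hx
      simp [hgdef, hx]
    exact hFd.congr_of_eventuallyEq hev
  -- nonnegativity
  have hnonneg : ∀ y ∈ Ioo (0:ℝ) 1, 0 ≤ f y := by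
    intro y hy
    have h1 : 1 ≤ y ^ (α - 2) :=
      Real.one_le_rpow_of_pos_of_le_one_of_nonpos hy.1 hy.2.le (by linarith)
    have h2 : 0 < (1 - y) ^ α := Real.rpow_pos_of_pos (by linarith [hy.2]) _
    exact div_nonneg (by linarith) h2.le
  -- limit of F at 1⁻
  have hslope : Tendsto (fun y : ℝ => (y ^ (α - 1) - 1) / (y - 1)) (𝓝[≠] (1:ℝ))
      (𝓝 (α - 1)) := by
    have hd := Real.hasDerivAt_rpow_const (x := (1:ℝ)) (p := α - 1) (Or.inl one_ne_zero)
    rw [Real.one_rpow, mul_one] at hd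
    have h := hasDerivAt_iff_tendsto_slope.mp hd
    refine h.congr' ?_
    filter_upwards [self_mem_nhdsWithin] with x hx
    simp [slope_def_field, Real.one_rpow]
  have hpow : Tendsto (fun y : ℝ => (1 - y) ^ (2 - α)) (𝓝[<] (1:ℝ)) (𝓝 0) := by
    have h0 : Tendsto (fun y : ℝ => 1 - y) (𝓝[<] (1:ℝ)) (𝓝 0) := by
      have h : Tendsto (fun y : ℝ => 1 - y) (𝓝 (1:ℝ)) (𝓝 (1 - 1)) :=
        (continuous_const.sub continuous_id).tendsto 1
      rw [sub_self] at h
      exact h.mono_left nhdsWithin_le_nhds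
    have hcont0 : ContinuousAt (fun x : ℝ => x ^ (2 - α)) 0 :=
      Real.continuousAt_rpow_const 0 _ (Or.inr (by linarith))
    have := hcont0.tendsto.comp h0
    simpa [Function.comp_def, Real.zero_rpow (show (2:ℝ) - α ≠ 0 by linarith)] using this
  have hlim : Tendsto F (𝓝[<] (1:ℝ)) (𝓝 0) := by
    have hsl : Tendsto (fun y : ℝ => (y ^ (α - 1) - 1) / (y - 1)) (𝓝[<] (1:ℝ))
        (𝓝 (α - 1)) := hslope.mono_left (nhdsWithin_mono _ (fun x hx => ne_of_lt hx))
    have hmul : Tendsto (fun y : ℝ => -((1 - y) ^ (2 - α) * ((y ^ (α - 1) - 1) / (y - 1))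
        / (α - 1))) (𝓝[<] (1:ℝ)) (𝓝 (-(0 * (α - 1) / (α - 1)))) :=
      ((hpow.mul hsl).div_const _).neg
    rw [zero_mul, zero_div, neg_zero] at hmul
    refine hmul.congr' ?_
    have hmem : Ioo (0:ℝ) 1 ∈ 𝓝[<] (1:ℝ) := Ioo_mem_nhdsLT_of_mem (by constructor <;> norm_num)
    filter_upwards [hmem] with y hy
    obtain ⟨hy0, hy1⟩ := hy
    have h1y : 0 < 1 - y := by linarith
    have hA : (0:ℝ) < (1 - y) ^ (α - 1) := Real.rpow_pos_of_pos h1y _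
    have key : (1 - y) ^ (α - 1) * (1 - y) ^ (2 - α) = 1 - y := by
      rw [← Real.rpow_add h1y]
      norm_num
    have hP : (1 - y) ^ (2 - α) = (1 - y) / (1 - y) ^ (α - 1) := by
      rw [eq_div_iff hA.ne', mul_comm, key]
    rw [hFdef]
    simp only
    rw [hP]
    have hy1' : y - 1 ≠ 0 := by intro h; linarith [sub_eq_zero.mp h]
    field_simp
    ring
  -- continuity of g on [0,1]
  have hgcont : ContinuousOn g (Icc 0 1) := by
    intro y hy
    rcases lt_or_eq_of_le hy.2 with hy1 | hy1
    · have hFc : ContinuousAt F y := by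
        apply ContinuousAt.div
        · exact ((Real.continuousAt_rpow_const y _ (Or.inr hc.le))).sub continuousAt_const
        · exact continuousAt_const.mul ((Real.continuousAt_rpow_const (1 - y) _
            (Or.inl (by intro h; linarith [sub_eq_zero.mp h]))).comp
            ((continuous_const.sub continuous_id).continuousAt))
        · exact mul_ne_zero hc' (Real.rpow_pos_of_pos (by linarith) _).ne'
      have hev : F =ᶠ[𝓝 y] g := by
        filter_upwards [eventually_lt_nhds hy1] with x hx
        simp [hgdef, hx]
      exact (hFc.congr hev).continuousWithinAt
    · subst hy1
      have hg1 : g 1 = 0 := by simp [hgdef]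
      rw [ContinuousWithinAt, hg1]
      have hmono : 𝓝[Icc (0:ℝ) 1] 1 ≤ 𝓝[Iic (1:ℝ)] 1 :=
        nhdsWithin_mono _ (fun x hx => hx.2)
      refine Tendsto.mono_left ?_ hmono
      rw [← Iio_union_right, nhdsWithin_union]
      rw [tendsto_sup]
      constructor
      · refine hlim.congr' ?_
        filter_upwards [self_mem_nhdsWithin] with x hx
        simp [hgdef, mem_Iio.mp hx]
      · rw [nhdsWithin_singleton]
        simpa [hg1] using (tendsto_pure_nhds g 1)
  -- integrability
  have hint : IntegrableOn f (Ioc 0 1) :=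
    intervalIntegral.integrableOn_deriv_of_nonneg hgcont hderiv hnonneg
  have hint' : IntegrableOn f (Ioo 0 1) := hint.mono_set Ioo_subset_Ioc_self
  refine ⟨hint', ?_⟩
  have hii : IntervalIntegrable f volume 0 1 :=
    (intervalIntegrable_iff_integrableOn_Ioc_of_le zero_le_one).mpr hint
  have hftc := intervalIntegral.integral_eq_sub_of_hasDeriv_right_of_le zero_le_one hgcont
    (fun x hx => (hderiv x hx).hasDerivWithinAt) hii
  have hg1 : g 1 = 0 := by simp [hgdef]
  have hg0 : g 0 = -(1 / (α - 1)) := by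
    simp [hgdef, hFdef, Real.zero_rpow hc', Real.one_rpow]
    ring
  rw [intervalIntegral.integral_of_le zero_le_one] at hftc
  rw [← MeasureTheory.integral_Ioc_eq_integral_Ioo, hftc, hg1, hg0]
  ring
end
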